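/- Let X_1, …, X_N be finitely many points of [0,1]² whose first coordinates are pairwise distinct and lie in the open interval (0,1). Then for every M ∈ ℝ there exists an MTP2 probability density ρ on [0,1]² (with respect to the Lebesgue measure) such that Σ_{i=1}^N log ρ(X_i) > M. Consequently, the supremum of the log-likelihood Σ_{i=1}^N log ρ(X_i) over all MTP2 densities ρ on [0,1]² is +∞, and a maximum likelihood estimator over the MTP2 class does not exist. -/

import Mathlib

open MeasureTheory

noncomputable section

/-- The unit square `[0,1]² ⊆ ℝ²`. -/
def unitSq : Set (ℝ × ℝ) := Set.Icc (0 : ℝ) 1 ×ˢ Set.Icc (0 : ℝ) 1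

/-- `ρ` is an MTP₂ probability density on `[0,1]²` with respect to the Lebesgue measure. -/
def IsMTP2Density (ρ : ℝ × ℝ → ℝ) : Prop :=
  Measurable ρ ∧ (∀ z ∈ unitSq, 0 ≤ ρ z) ∧ (∫ z in unitSq, ρ z) = 1 ∧
    ∀ z ∈ unitSq, ∀ w ∈ unitSq,
      ρ z * ρ w ≤ ρ (min z.1 w.1, min z.2 w.2) * ρ (max z.1 w.1, max z.2 w.2)

lemma fst_density {f : ℝ → ℝ} (hf : Measurable f) (h0 : ∀ x, 0 ≤ f x)
    (hC : ∃ C, ∀ x, f x ≤ C)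
    (h1 : (∫ x in Set.Icc (0:ℝ) 1, f x) = 1) :
    IsMTP2Density (fun z : ℝ × ℝ => f z.1) := by
  refine ⟨hf.comp measurable_fst, fun z _ => h0 _, ?_, ?_⟩
  · obtain ⟨C, hC⟩ := hC
    have hvol : volume unitSq ≠ ⊤ := ((isCompact_Icc.prod isCompact_Icc).measure_lt_top).ne
    have hint : IntegrableOn (fun z : ℝ × ℝ => f z.1) unitSq := by
      apply Measure.integrableOn_of_bounded hvol ((hf.comp measurable_fst).aestronglyMeasurable)
      filter_upwards with z
      simp only [Function.comp_apply, Real.norm_eq_abs]; rw [abs_of_nonneg (h0 _)]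
      exact hC _
    rw [unitSq, Measure.volume_eq_prod] at hint ⊢
    rw [MeasureTheory.setIntegral_prod _ hint]
    simp only [MeasureTheory.setIntegral_const, Real.volume_Icc, sub_zero,
      ENNReal.toReal_ofReal zero_le_one, Real.volume_real_Icc_of_le zero_le_one, one_smul]
    exact h1
  · intro z _ w _
    rcases le_total z.1 w.1 with h | h
    · rw [min_eq_left h, max_eq_right h]
    · rw [min_eq_right h, max_eq_left h, mul_comm]

theorem mle_nonexistence {N : ℕ} (hN : 0 < N) (X : Fin N → ℝ × ℝ)
    (hX : ∀ k, X k ∈ unitSq)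
    (hfirst : ∀ k, (X k).1 ∈ Set.Ioo (0 : ℝ) 1)
    (hdistinct : ∀ k l, k ≠ l → (X k).1 ≠ (X l).1) :
    (∀ M : ℝ, ∃ ρ, IsMTP2Density ρ ∧ M < ∑ k, Real.log (ρ (X k))) ∧
    ¬∃ ρ₀, IsMTP2Density ρ₀ ∧
      ∀ ρ, IsMTP2Density ρ → ∑ k, Real.log (ρ (X k)) ≤ ∑ k, Real.log (ρ₀ (X k)) := by
  have hNe : Nonempty (Fin N) := ⟨⟨0, hN⟩⟩
  have hNR : (0:ℝ) < N := Nat.cast_pos.mpr hN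
  have main : ∀ M : ℝ, ∃ ρ, IsMTP2Density ρ ∧ M < ∑ k, Real.log (ρ (X k)) := by
    intro M
    -- choose ε
    set ε₀ : ℝ := Finset.univ.inf' Finset.univ_nonempty
      (fun k => min (X k).1 (1 - (X k).1)) with hε₀def
    have hε₀pos : 0 < ε₀ := by
      apply (Finset.lt_inf'_iff _).mpr
      intro k _
      exact lt_min (hfirst k).1 (by linarith [(hfirst k).2])
    set E : ℝ := Real.exp (M / N + 1) with hEdef
    have hEpos : 0 < E := Real.exp_pos _
    set ε : ℝ := min ε₀ (2 * N * E)⁻¹ with hεdef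
    have hεpos : 0 < ε := lt_min hε₀pos (by positivity)
    set c : ℝ := (2 * ε * N)⁻¹ with hcdef
    have hcpos : 0 < c := by positivity
    -- the density
    set f : ℝ → ℝ := fun x => c * ∑ k, (Set.Icc ((X k).1 - ε) ((X k).1 + ε)).indicator 1 x
      with hfdef
    have hsub : ∀ k, Set.Icc ((X k).1 - ε) ((X k).1 + ε) ⊆ Set.Icc (0:ℝ) 1 := by
      intro k
      have h1 : ε ≤ min (X k).1 (1 - (X k).1) :=
        le_trans (min_le_left _ _) (Finset.inf'_le _ (Finset.mem_univ k))
      apply Set.Icc_subset_Icc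
      · have := le_min_iff.mp h1 |>.1; linarith
      · have := le_min_iff.mp h1 |>.2; linarith
    have hind0 : ∀ (s : Set ℝ) (x : ℝ), 0 ≤ s.indicator (1 : ℝ → ℝ) x := by
      intro s x; exact Set.indicator_nonneg (fun _ _ => zero_le_one) x
    have hind1 : ∀ (s : Set ℝ) (x : ℝ), s.indicator (1 : ℝ → ℝ) x ≤ 1 := by
      intro s x
      by_cases h : x ∈ s
      · rw [Set.indicator_of_mem h]; simp
      · rw [Set.indicator_of_notMem h]; exact zero_le_one
    have hf0 : ∀ x, 0 ≤ f x := by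
      intro x
      exact mul_nonneg hcpos.le (Finset.sum_nonneg fun k _ => hind0 _ _)
    have hfmeas : Measurable f := by
      apply Measurable.const_mul
      exact Finset.measurable_sum _ fun k _ => measurable_const.indicator measurableSet_Icc
    have hfbd : ∃ C, ∀ x, f x ≤ C := by
      refine ⟨c * N, fun x => ?_⟩
      apply mul_le_mul_of_nonneg_left _ hcpos.le
      calc ∑ k, (Set.Icc ((X k).1 - ε) ((X k).1 + ε)).indicator (1:ℝ→ℝ) x
          ≤ ∑ _k : Fin N, (1:ℝ) := Finset.sum_le_sum fun k _ => hind1 _ _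
        _ = N := by simp
    -- integral of each indicator over [0,1]
    have hindint : ∀ k : Fin N, Integrable
        ((Set.Icc ((X k).1 - ε) ((X k).1 + ε)).indicator (1:ℝ→ℝ))
        (volume.restrict (Set.Icc (0:ℝ) 1)) := by
      intro k
      apply Integrable.integrableOn
      rw [integrable_indicator_iff measurableSet_Icc]
      exact integrableOn_const measure_Icc_lt_top.ne
    have hindval : ∀ k : Fin N,
        (∫ x in Set.Icc (0:ℝ) 1, (Set.Icc ((X k).1 - ε) ((X k).1 + ε)).indicator (1:ℝ→ℝ) x)
          = 2 * ε := by
      intro k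
      rw [MeasureTheory.setIntegral_indicator measurableSet_Icc,
        Set.inter_eq_self_of_subset_right (hsub k)]
      simp only [Pi.one_apply, Real.volume_Icc, MeasureTheory.setIntegral_const, smul_eq_mul, mul_one]
      rw [Real.volume_real_Icc_of_le (by linarith)]
      ring
    have h1 : (∫ x in Set.Icc (0:ℝ) 1, f x) = 1 := by
      rw [hfdef]
      rw [MeasureTheory.integral_const_mul]
      rw [MeasureTheory.integral_finset_sum _ fun k _ => hindint k]
      rw [Finset.sum_congr rfl fun k _ => hindval k]
      rw [Finset.sum_const, Finset.card_univ, Fintype.card_fin, nsmul_eq_mul]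
      rw [hcdef]
      field_simp
    refine ⟨fun z => f z.1, fst_density hfmeas hf0 hfbd h1, ?_⟩
    -- likelihood bound
    have hfk : ∀ k, c ≤ f ((X k).1) := by
      intro k
      rw [hfdef]
      have hmem : (X k).1 ∈ Set.Icc ((X k).1 - ε) ((X k).1 + ε) :=
        ⟨by linarith, by linarith⟩
      have : (1:ℝ) ≤ ∑ j, (Set.Icc ((X j).1 - ε) ((X j).1 + ε)).indicator (1:ℝ→ℝ) (X k).1 := by
        calc (1:ℝ) = (Set.Icc ((X k).1 - ε) ((X k).1 + ε)).indicator (1:ℝ→ℝ) (X k).1 := by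
              rw [Set.indicator_of_mem hmem]; simp
          _ ≤ _ := Finset.single_le_sum (f := fun j => (Set.Icc ((X j).1 - ε) ((X j).1 + ε)).indicator (1:ℝ→ℝ) (X k).1) (fun j _ => hind0 _ _) (Finset.mem_univ k)
      calc c = c * 1 := (mul_one c).symm
        _ ≤ _ := mul_le_mul_of_nonneg_left this hcpos.le
    have hcE : E ≤ c := by
      rw [hcdef]
      rw [le_inv_comm₀ hEpos (by positivity)]
      calc 2 * ε * N ≤ 2 * (2 * N * E)⁻¹ * N := by
            have := min_le_right ε₀ (2 * N * E)⁻¹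
            nlinarith
        _ = E⁻¹ := by field_simp
    have hlogc : M / N + 1 ≤ Real.log c := by
      calc M / N + 1 = Real.log E := (Real.log_exp _).symm
        _ ≤ Real.log c := Real.log_le_log hEpos hcE
    calc M < N * (M / N + 1) := by
          rw [mul_add, mul_div_cancel₀ _ hNR.ne', mul_one]; linarith
      _ ≤ N * Real.log c := by
          apply mul_le_mul_of_nonneg_left hlogc hNR.le
      _ = ∑ _k : Fin N, Real.log c := by
          rw [Finset.sum_const, Finset.card_univ, Fintype.card_fin, nsmul_eq_mul]
      _ ≤ ∑ k, Real.log (f ((X k).1)) :=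
          Finset.sum_le_sum fun k _ => Real.log_le_log hcpos (hfk k)
  refine ⟨main, ?_⟩
  rintro ⟨ρ₀, h₀, hmax⟩
  obtain ⟨ρ, hρ, hgt⟩ := main (∑ k, Real.log (ρ₀ (X k)))
  exact absurd (hmax ρ hρ) (not_le.mpr hgt)
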